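/- Let f(t) = (α + βt)·e^{−πt²} and g(t) = (γ + δt)·e^{−πt²} with α, β, γ, δ ∈ ℂ (i.e., f and g are linear combinations of the Hermite functions h_0 and h_1). If it is not the case that β = 0 and δ = 0 (i.e., f and g are not both multiples of h_0), then the Wigner distribution W(f,g) has a zero: there exists (x,ξ) ∈ ℝ² with W(f,g)(x,ξ) = 0. -/

import Mathlib

open MeasureTheory Complex

/-- The cross-Wigner distribution of `f, g : ℝ → ℂ`. -/
noncomputable def wigner (f g : ℝ → ℂ) (x ξ : ℝ) : ℂ :=
  ∫ t : ℝ, f (x + t / 2) * (starRingEnd ℂ) (g (x - t / 2)) *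
    Complex.exp (-2 * Real.pi * Complex.I * ξ * t)


lemma integrable_pow_gauss (k : ℕ) (c : ℂ) :
    Integrable (fun t : ℝ => (t : ℂ) ^ k *
      Complex.exp (-(Real.pi : ℂ) / 2 * (t : ℂ) ^ 2 + c * t)) := by
  have hπ := Real.pi_pos
  set a : ℝ := k + |c.re| with ha
  have ha0 : 0 ≤ a := by positivity
  have hg : Integrable (fun t : ℝ => Real.exp (a ^ 2 / Real.pi) * Real.exp (-(Real.pi / 4) * t ^ 2)) :=
    (integrable_exp_neg_mul_sq (by positivity)).const_mul _
  refine hg.mono' ?_ ?_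
  · apply Continuous.aestronglyMeasurable
    fun_prop
  · filter_upwards with t
    have h1 : ‖(t : ℂ) ^ k * Complex.exp (-(Real.pi : ℂ) / 2 * (t : ℂ) ^ 2 + c * t)‖
        = |t| ^ k * Real.exp (-(Real.pi / 2) * t ^ 2 + c.re * t) := by
      rw [norm_mul, norm_pow, Complex.norm_real, Real.norm_eq_abs,
        Complex.norm_exp]
      congr 2
      simp [Complex.add_re, Complex.mul_re, Complex.div_re, Complex.normSq, ← Complex.ofReal_pow]
      ring
    rw [h1]
    have h2 : |t| ^ k ≤ Real.exp (k * |t|) := by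
      calc |t| ^ k ≤ Real.exp |t| ^ k := by
            apply pow_le_pow_left₀ (abs_nonneg t)
            linarith [Real.add_one_le_exp |t|]
        _ = Real.exp (k * |t|) := by rw [← Real.exp_nat_mul]
    have h3 : c.re * t ≤ |c.re| * |t| := by
      calc c.re * t ≤ |c.re * t| := le_abs_self _
        _ = |c.re| * |t| := abs_mul _ _
    have h4 : a * |t| ≤ a ^ 2 / Real.pi + Real.pi / 4 * t ^ 2 := by
      have hmul : a * |t| * Real.pi ≤ (a ^ 2 / Real.pi + Real.pi / 4 * t ^ 2) * Real.pi := by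
        have hexp : (a ^ 2 / Real.pi + Real.pi / 4 * t ^ 2) * Real.pi
            = a ^ 2 + Real.pi ^ 2 * t ^ 2 / 4 := by field_simp
        rw [hexp]
        nlinarith [sq_nonneg (a - Real.pi / 2 * |t|), _root_.sq_abs t]
      exact le_of_mul_le_mul_right hmul hπ
    calc |t| ^ k * Real.exp (-(Real.pi / 2) * t ^ 2 + c.re * t)
        ≤ Real.exp (k * |t|) * Real.exp (-(Real.pi / 2) * t ^ 2 + c.re * t) :=
          mul_le_mul_of_nonneg_right h2 (Real.exp_pos _).le
      _ = Real.exp (k * |t| + (-(Real.pi / 2) * t ^ 2 + c.re * t)) := by rw [← Real.exp_add]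
      _ ≤ Real.exp (a ^ 2 / Real.pi + -(Real.pi / 4) * t ^ 2) := by
          apply Real.exp_le_exp.mpr; nlinarith [h3, h4]
      _ = Real.exp (a ^ 2 / Real.pi) * Real.exp (-(Real.pi / 4) * t ^ 2) := Real.exp_add _ _


lemma exists_point (α β γ' δ' : ℂ) (h : ¬(β = 0 ∧ δ' = 0)) :
    ∃ x ξ : ℝ, 4 * (Real.pi : ℂ) *
      ((α + β * ((x : ℂ) - (ξ : ℂ) * Complex.I)) * (γ' + δ' * ((x : ℂ) + (ξ : ℂ) * Complex.I)))
      = β * δ' := by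
  have hπ : (Real.pi : ℂ) ≠ 0 := by exact_mod_cast Real.pi_ne_zero
  by_cases hβ : β = 0
  · have hδ : δ' ≠ 0 := fun hd => h ⟨hβ, hd⟩
    set z : ℂ := -γ' / δ' with hz
    refine ⟨z.re, z.im, ?_⟩
    rw [Complex.re_add_im]
    have h2 : γ' + δ' * z = 0 := by rw [hz]; field_simp; ring
    rw [h2, hβ]
    ring
  · by_cases hδ : δ' = 0
    · set w : ℂ := -α / β with hw
      refine ⟨w.re, -w.im, ?_⟩
      have h1 : ((w.re : ℝ) : ℂ) - ((-w.im : ℝ) : ℂ) * Complex.I = w := by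
        push_cast
        rw [show (w.re : ℂ) - -(w.im : ℂ) * I = (w.re : ℂ) + (w.im : ℂ) * I by ring,
          Complex.re_add_im]
      rw [h1]
      have h2 : α + β * w = 0 := by rw [hw]; field_simp; ring
      rw [h2, hδ]
      ring
    · set a : ℂ := α / β with hadef
      set bb : ℂ := γ' / δ' with hbbdef
      set m : ℂ := a - (starRingEnd ℂ) bb with hmdef
      have key : ∃ w : ℂ, 4 * (Real.pi : ℂ) * (((starRingEnd ℂ) w + m) * w) = 1 := by
        by_cases hm : m = 0
        · refine ⟨(Real.sqrt (1 / (4 * Real.pi)) : ℝ), ?_⟩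
          rw [hm, Complex.conj_ofReal]
          rw [add_zero, ← Complex.ofReal_mul, Real.mul_self_sqrt (by positivity)]
          push_cast
          field_simp
        · set s : ℝ := ‖m‖ with hs
          have hs0 : (0:ℝ) < s := norm_pos_iff.mpr hm
          set r : ℝ := (s + Real.sqrt (s ^ 2 + 1 / Real.pi)) / 2 with hr
          set k : ℝ := r / s with hk
          have hq : Real.sqrt (s ^ 2 + 1 / Real.pi) ^ 2 = s ^ 2 + 1 / Real.pi :=
            Real.sq_sqrt (by positivity)
          have hrr : r ^ 2 - s * r = 1 / (4 * Real.pi) := by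
            have h5 : r ^ 2 - s * r = (Real.sqrt (s ^ 2 + 1 / Real.pi) ^ 2 - s ^ 2) / 4 := by
              rw [hr]; ring
            rw [h5, hq]
            field_simp
            ring
          have hrr2 : 4 * Real.pi * (r ^ 2 - s * r) = 1 := by
            rw [hrr]; field_simp
          have hrr2C : 4 * (Real.pi : ℂ) * ((r : ℂ) ^ 2 - (s : ℂ) * (r : ℂ)) = 1 := by
            exact_mod_cast hrr2
          have hksR : k * s = r := div_mul_cancel₀ r (ne_of_gt hs0)
          have hksC : (k : ℂ) * (s : ℂ) = (r : ℂ) := by exact_mod_cast hksR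
          have hmm : m * (starRingEnd ℂ) m = (s : ℂ) ^ 2 := by
            rw [Complex.mul_conj]
            norm_cast
            rw [hs, ← Complex.sq_norm]
          refine ⟨-((k : ℝ) : ℂ) * ((starRingEnd ℂ) m), ?_⟩
          have hconj : (starRingEnd ℂ) (-((k : ℝ) : ℂ) * ((starRingEnd ℂ) m))
              = -((k : ℝ) : ℂ) * m := by
            simp [map_mul, Complex.conj_ofReal]
          rw [hconj]
          linear_combination (4 * (Real.pi : ℂ) * ((k:ℂ)^2 - (k:ℂ))) * hmm + hrr2C
            + (4 * (Real.pi : ℂ) * ((k:ℂ) * (s:ℂ) + (r:ℂ) - (s:ℂ))) * hksC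
      obtain ⟨w, hw⟩ := key
      set z : ℂ := w - bb with hzdef
      refine ⟨z.re, z.im, ?_⟩
      have h1 : (z.re : ℂ) + z.im * Complex.I = z := Complex.re_add_im z
      have h2 : (z.re : ℂ) - z.im * Complex.I = (starRingEnd ℂ) z := by
        rw [← Complex.re_add_im ((starRingEnd ℂ) z)]
        simp
        ring
      rw [h1, h2, hzdef]
      have hα : α = β * a := by rw [hadef]; field_simp
      have hγ : γ' = δ' * bb := by rw [hbbdef]; field_simp
      rw [map_sub]
      calc 4 * (Real.pi : ℂ) * ((α + β * ((starRingEnd ℂ) w - (starRingEnd ℂ) bb)) *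
              (γ' + δ' * (w - bb)))
          = (β * δ') * (4 * (Real.pi : ℂ) * (((starRingEnd ℂ) w + m) * w)) := by
            rw [hα, hγ, hmdef]; ring
        _ = β * δ' := by rw [hw]; ring

theorem wigner_hermite01_has_zero (α β γ δ : ℂ) (h : ¬(β = 0 ∧ δ = 0)) :
    ∃ x ξ : ℝ, wigner
      (fun t => (α + β * t) * Complex.exp (-Real.pi * t ^ 2))
      (fun t => (γ + δ * t) * Complex.exp (-Real.pi * t ^ 2)) x ξ = 0 := by
  have hπ : (Real.pi : ℂ) ≠ 0 := by exact_mod_cast Real.pi_ne_zero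
  obtain ⟨x, ξ, hz⟩ := exists_point α β ((starRingEnd ℂ) γ) ((starRingEnd ℂ) δ)
    (by simpa using h)
  refine ⟨x, ξ, ?_⟩
  simp only [wigner]
  set c : ℂ := -2 * (Real.pi:ℂ) * Complex.I * (ξ:ℂ) with hc
  set γ' : ℂ := (starRingEnd ℂ) γ with hγ'
  set δ' : ℂ := (starRingEnd ℂ) δ with hδ'
  set F : ℝ → ℂ := fun t => Complex.exp (-(Real.pi : ℂ) / 2 * (t : ℂ) ^ 2 + c * t) with hF
  set E : ℂ := Complex.exp (-2 * (Real.pi : ℂ) * (x:ℂ) ^ 2) with hE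
  set P₀ : ℂ := (α + β * (x:ℂ)) * (γ' + δ' * (x:ℂ)) with hP₀
  set P₁ : ℂ := (β * γ' - α * δ') / 2 with hP₁
  set P₂ : ℂ := -(β * δ') / 4 with hP₂
  -- integrability
  have hI0 : Integrable F := by
    have := integrable_pow_gauss 0 c
    simpa [hF] using this
  have hI1 : Integrable (fun t : ℝ => (t:ℂ) * F t) := by
    have := integrable_pow_gauss 1 c
    simpa [hF] using this
  have hI2 : Integrable (fun t : ℝ => (t:ℂ) ^ 2 * F t) := by
    have := integrable_pow_gauss 2 c
    simpa [hF] using this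
  set I₀ : ℂ := ∫ t : ℝ, F t with hI₀
  set I₁ : ℂ := ∫ t : ℝ, (t:ℂ) * F t with hI₁
  set I₂ : ℂ := ∫ t : ℝ, (t:ℂ) ^ 2 * F t with hI₂
  -- derivative of F
  have hF' : ∀ t : ℝ, HasDerivAt F ((-(Real.pi:ℂ) * t + c) * F t) t := by
    intro t
    have hp : HasDerivAt (fun z : ℂ => -(Real.pi:ℂ)/2 * z^2 + c*z)
        (-(Real.pi:ℂ)/2 * (2*(t:ℂ)^1) + c * 1) (t:ℂ) := by
      exact ((hasDerivAt_pow 2 ((t:ℂ))).const_mul (-(Real.pi:ℂ)/2)).add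
        ((hasDerivAt_id (t:ℂ)).const_mul c)
    have h1 := hp.cexp
    have h2 := h1.comp_ofReal
    rw [hF]
    convert h2 using 1
    push_cast
    ring
  -- R1
  have hintd1 : Integrable (fun t : ℝ => (-(Real.pi:ℂ) * t + c) * F t) :=
    ((hI1.const_mul (-(Real.pi:ℂ))).add (hI0.const_mul c)).congr
      (by filter_upwards with t; simp only [Pi.add_apply]; ring)
  have R1 : -(Real.pi:ℂ) * I₁ + c * I₀ = 0 := by
    have h0 : (∫ t : ℝ, (-(Real.pi:ℂ) * t + c) * F t) = 0 :=
      integral_eq_zero_of_hasDerivAt_of_integrable hF' hintd1 hI0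
    have e : (fun t : ℝ => (-(Real.pi:ℂ) * t + c) * F t)
        = fun t : ℝ => -(Real.pi:ℂ) * ((t:ℂ) * F t) + c * F t := funext fun t => by ring
    rw [e, integral_add (hI1.const_mul _) (hI0.const_mul c), MeasureTheory.integral_const_mul,
      MeasureTheory.integral_const_mul, ← hI₁, ← hI₀] at h0
    exact h0
  -- R2
  have hG' : ∀ t : ℝ, HasDerivAt (fun s : ℝ => (s:ℂ) * F s)
      (F t + (t:ℂ) * ((-(Real.pi:ℂ) * t + c) * F t)) t := by
    intro t
    have hid : HasDerivAt (fun s : ℝ => (s:ℂ)) 1 t := by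
      simpa using (hasDerivAt_id t).ofReal_comp
    have := hid.mul (hF' t)
    simp only [one_mul] at this
    exact this
  have hintd2 : Integrable (fun t : ℝ => F t + (t:ℂ) * ((-(Real.pi:ℂ) * t + c) * F t)) :=
    (hI0.add (((hI2.const_mul (-(Real.pi:ℂ))).add (hI1.const_mul c)).congr
      (by filter_upwards with t; simp only [Pi.add_apply]; ring)))
  have R2 : I₀ + c * I₁ - (Real.pi:ℂ) * I₂ = 0 := by
    have h0 : (∫ t : ℝ, (F t + (t:ℂ) * ((-(Real.pi:ℂ) * t + c) * F t))) = 0 :=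
      integral_eq_zero_of_hasDerivAt_of_integrable hG' hintd2 hI1
    have e : (fun t : ℝ => F t + (t:ℂ) * ((-(Real.pi:ℂ) * t + c) * F t))
        = fun t : ℝ => F t + (c * ((t:ℂ) * F t) + -(Real.pi:ℂ) * ((t:ℂ)^2 * F t)) :=
      funext fun t => by ring
    have hI12 : Integrable (fun t : ℝ => c * ((t:ℂ) * F t) + -(Real.pi:ℂ) * ((t:ℂ)^2 * F t)) :=
      ((hI1.const_mul c).add (hI2.const_mul (-(Real.pi:ℂ)))).congr
        (by filter_upwards with t; simp)
    rw [e, integral_add hI0 hI12,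
      integral_add (hI1.const_mul c) (hI2.const_mul _), MeasureTheory.integral_const_mul,
      MeasureTheory.integral_const_mul, ← hI₀, ← hI₁, ← hI₂] at h0
    linear_combination h0
  -- pointwise rewriting of the integrand
  have hpt : ∀ t : ℝ,
      (α + β * ((x + t / 2 : ℝ) : ℂ)) * Complex.exp (-(Real.pi:ℂ) * ((x + t / 2 : ℝ):ℂ) ^ 2) *
        (starRingEnd ℂ) ((γ + δ * ((x - t / 2 : ℝ) : ℂ)) *
          Complex.exp (-(Real.pi:ℂ) * ((x - t / 2 : ℝ):ℂ) ^ 2)) *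
        Complex.exp (-2 * (Real.pi:ℂ) * Complex.I * (ξ:ℂ) * (t:ℂ))
      = E * (P₀ * F t + P₁ * ((t:ℂ) * F t) + P₂ * ((t:ℂ) ^ 2 * F t)) := by
    intro t
    have hconj : (starRingEnd ℂ) ((γ + δ * ((x - t / 2 : ℝ) : ℂ)) *
          Complex.exp (-(Real.pi:ℂ) * ((x - t / 2 : ℝ):ℂ) ^ 2))
        = (γ' + δ' * ((x - t / 2 : ℝ) : ℂ)) *
          Complex.exp (-(Real.pi:ℂ) * ((x - t / 2 : ℝ):ℂ) ^ 2) := by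
      simp only [map_mul, map_add, map_sub, map_div₀, map_ofNat, map_pow, map_neg,
        ← Complex.exp_conj, Complex.conj_ofReal]
      rw [hγ', hδ']
    rw [hconj]
    have hcomb : Complex.exp (-(Real.pi:ℂ) * ((x + t / 2 : ℝ):ℂ) ^ 2) *
          Complex.exp (-(Real.pi:ℂ) * ((x - t / 2 : ℝ):ℂ) ^ 2) *
          Complex.exp (-2 * (Real.pi:ℂ) * Complex.I * (ξ:ℂ) * (t:ℂ))
        = E * F t := by
      rw [hE, hF, ← Complex.exp_add, ← Complex.exp_add, ← Complex.exp_add]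
      congr 1
      push_cast
      ring
    calc (α + β * ((x + t / 2 : ℝ) : ℂ)) * Complex.exp (-(Real.pi:ℂ) * ((x + t / 2 : ℝ):ℂ) ^ 2) *
          ((γ' + δ' * ((x - t / 2 : ℝ) : ℂ)) *
            Complex.exp (-(Real.pi:ℂ) * ((x - t / 2 : ℝ):ℂ) ^ 2)) *
          Complex.exp (-2 * (Real.pi:ℂ) * Complex.I * (ξ:ℂ) * (t:ℂ))
        = ((α + β * ((x + t / 2 : ℝ) : ℂ)) * (γ' + δ' * ((x - t / 2 : ℝ) : ℂ))) *
            (Complex.exp (-(Real.pi:ℂ) * ((x + t / 2 : ℝ):ℂ) ^ 2) *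
             Complex.exp (-(Real.pi:ℂ) * ((x - t / 2 : ℝ):ℂ) ^ 2) *
             Complex.exp (-2 * (Real.pi:ℂ) * Complex.I * (ξ:ℂ) * (t:ℂ))) := by ring
      _ = ((α + β * ((x + t / 2 : ℝ) : ℂ)) * (γ' + δ' * ((x - t / 2 : ℝ) : ℂ))) * (E * F t) := by
            rw [hcomb]
      _ = E * (P₀ * F t + P₁ * ((t:ℂ) * F t) + P₂ * ((t:ℂ) ^ 2 * F t)) := by
            rw [hP₀, hP₁, hP₂]
            push_cast
            ring
  -- the integral
  have hW : (∫ t : ℝ,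
      (α + β * ((x + t / 2 : ℝ) : ℂ)) * Complex.exp (-(Real.pi:ℂ) * ((x + t / 2 : ℝ):ℂ) ^ 2) *
        (starRingEnd ℂ) ((γ + δ * ((x - t / 2 : ℝ) : ℂ)) *
          Complex.exp (-(Real.pi:ℂ) * ((x - t / 2 : ℝ):ℂ) ^ 2)) *
        Complex.exp (-2 * (Real.pi:ℂ) * Complex.I * (ξ:ℂ) * (t:ℂ)))
      = E * (P₀ * I₀ + P₁ * I₁ + P₂ * I₂) := by
    simp only [hpt]
    rw [MeasureTheory.integral_const_mul]
    congr 1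
    have hP01 : Integrable (fun t : ℝ => P₀ * F t + P₁ * ((t:ℂ) * F t)) :=
      ((hI0.const_mul P₀).add (hI1.const_mul P₁)).congr (by filter_upwards with t; simp)
    rw [integral_add hP01 (hI2.const_mul P₂),
      integral_add (hI0.const_mul P₀) (hI1.const_mul P₁),
      MeasureTheory.integral_const_mul, MeasureTheory.integral_const_mul,
      MeasureTheory.integral_const_mul, ← hI₀, ← hI₁, ← hI₂]
  -- final algebra
  have hQ : (Real.pi:ℂ)^2 * P₀ + (Real.pi:ℂ) * c * P₁ + ((Real.pi:ℂ) + c^2) * P₂ = 0 := by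
    rw [hc, hP₀, hP₁, hP₂]
    linear_combination ((Real.pi:ℂ)/4) * hz
  have hT : (Real.pi:ℂ)^2 * (P₀ * I₀ + P₁ * I₁ + P₂ * I₂) = 0 := by
    linear_combination I₀ * hQ + (-(Real.pi:ℂ) * P₁ - c * P₂) * R1 + (-(Real.pi:ℂ) * P₂) * R2
  have hT0 : P₀ * I₀ + P₁ * I₁ + P₂ * I₂ = 0 :=
    (mul_eq_zero.mp hT).resolve_left (pow_ne_zero _ hπ)
  rw [hW, hT0, mul_zero]
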